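/- Let λ be a partition of n and let P and Q be p-subgroups of the symmetric group S_n having the same orbit type on {1,…,n}. Then dim_F Y^λ(P) = dim_F Y^λ(Q), where Y^λ is the Young module labelled by λ. -/

import Mathlib

open scoped BigOperators

/-! ## Brauer construction for representations of finite groups -/

section Brauer

variable {F : Type} [Field F] {G : Type} [Group G]
variable {V : Type} [AddCommGroup V] [Module F V]

/-- The submodule of `P`-fixed points of a representation. -/
def repFixed (ρ : Representation F G V) (P : Subgroup G) : Submodule F V where
  carrier := {v | ∀ g ∈ P, ρ g v = v}
  add_mem' := by
    intro a b ha hb g hg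
    simp [map_add, ha g hg, hb g hg]
  zero_mem' := by
    intro g hg
    simp
  smul_mem' := by
    intro c v hv g hg
    simp [map_smul, hv g hg]

/-- The relative trace map `Tr_Q^P` (as a bare function, summing over a set of
left coset representatives of `Q` in `P`). -/
noncomputable def relTrace [Finite G] (ρ : Representation F G V) (P Q : Subgroup G)
    (v : V) : V := by
  classical
  have : Fintype (P ⧸ Q.subgroupOf P) := Fintype.ofFinite _
  exact ∑ x : P ⧸ Q.subgroupOf P, ρ ((Quotient.out x : ↥P) : G) v

/-- The subspace `Tr^P(M) = Σ_{Q < P} Tr_Q^P (M^Q)` (as a submodule of `V`). -/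
noncomputable def brauerTraceSub [Finite G] (ρ : Representation F G V) (P : Subgroup G) :
    Submodule F V :=
  Submodule.span F {w | ∃ Q : Subgroup G, Q < P ∧ ∃ v ∈ repFixed ρ Q, w = relTrace ρ P Q v}

/-- The dimension of the Brauer construction `M(P) = M^P / Tr^P(M)`. -/
noncomputable def brauerDim [Finite G] (ρ : Representation F G V) (P : Subgroup G) : ℕ :=
  Module.finrank F
    (↥(repFixed ρ P) ⧸ ((brauerTraceSub ρ P).comap (repFixed ρ P).subtype))

/-- `σ` is (isomorphic to) a direct summand of `ρ`: there is an equivariant split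
injection of `σ` into `ρ`. -/
def IsRepSummand {W : Type} [AddCommGroup W] [Module F W]
    (ρ : Representation F G V) (σ : Representation F G W) : Prop :=
  ∃ (ι : W →ₗ[F] V) (π : V →ₗ[F] W),
    (∀ g w, ι (σ g w) = ρ g (ι w)) ∧ (∀ g v, π (ρ g v) = σ g (π v)) ∧ ∀ w, π (ι w) = w

/-- A representation is indecomposable: nonzero, and admitting no nontrivial
decomposition into two invariant submodules. -/
def IsIndecomposableRep (ρ : Representation F G V) : Prop :=
  (∃ v : V, v ≠ 0) ∧
  ∀ A B : Submodule F V, (∀ g, ∀ v ∈ A, ρ g v ∈ A) → (∀ g, ∀ v ∈ B, ρ g v ∈ B) →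
    A ⊓ B = ⊥ → A ⊔ B = ⊤ → A = ⊥ ∨ B = ⊥

/-- Isomorphism of representations. -/
def RepIso {W : Type} [AddCommGroup W] [Module F W]
    (ρ : Representation F G V) (σ : Representation F G W) : Prop :=
  ∃ e : V ≃ₗ[F] W, ∀ g v, e (ρ g v) = σ g (e v)

end Brauer

/-! ## Compositions, partitions, tabloids and Young modules -/

section Young

/-- A composition of `n` as a finitely supported function `ℕ → ℕ` with sum `n`. -/
def IsCompositionFn (c : ℕ → ℕ) (n : ℕ) : Prop :=
  (Function.support c).Finite ∧ ∑ᶠ j, c j = n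

/-- A partition of `n` as a finitely supported weakly decreasing function `ℕ → ℕ`
with sum `n`. -/
def IsPartitionFn (c : ℕ → ℕ) (n : ℕ) : Prop :=
  IsCompositionFn c n ∧ Antitone c

/-- A `p`-restricted partition: all successive differences (including the last
part) are `< p`. -/
def IsPRestrictedFn (p : ℕ) (c : ℕ → ℕ) : Prop := ∀ j, c j - c (j + 1) < p

/-- The dominance order: `Dominates lam mu` means `lam ⊵ mu`. -/
def Dominates (lam mu : ℕ → ℕ) : Prop :=
  ∀ N, ∑ j ∈ Finset.range N, mu j ≤ ∑ j ∈ Finset.range N, lam j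

/-- Strict dominance `lam ⊳ mu`. -/
def StrictDominates (lam mu : ℕ → ℕ) : Prop := Dominates lam mu ∧ lam ≠ mu

/-- A `c`-tabloid: a tuple of pairwise disjoint subsets of `{1,…,n}` covering
everything, the `j`-th of size `c j`. -/
structure Tabloid (n : ℕ) (c : ℕ → ℕ) where
  row : ℕ → Finset (Fin n)
  disj : ∀ i j, i ≠ j → Disjoint (row i) (row j)
  card_row : ∀ j, (row j).card = c j
  cover : ∀ x, ∃ j, x ∈ row j

theorem Tabloid.ext' {n : ℕ} {c : ℕ → ℕ} {T S : Tabloid n c} (h : T.row = S.row) :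
    T = S := by
  cases T; cases S; simp_all

/-- The natural action of the symmetric group on tabloids. -/
instance {n : ℕ} {c : ℕ → ℕ} : MulAction (Equiv.Perm (Fin n)) (Tabloid n c) where
  smul σ T :=
    { row := fun j => (T.row j).image σ
      disj := fun i j h => (Finset.disjoint_image σ.injective).mpr (T.disj i j h)
      card_row := fun j => by
        rw [Finset.card_image_of_injective _ σ.injective, T.card_row]
      cover := fun x => by
        obtain ⟨j, hj⟩ := T.cover (σ⁻¹ x)
        exact ⟨j, Finset.mem_image.mpr ⟨σ⁻¹ x, hj, by simp⟩⟩ }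
  one_smul T := Tabloid.ext' (by funext j; exact Finset.image_id)
  mul_smul a b T := Tabloid.ext' (by
    funext j
    show Finset.image (⇑(a * b)) _ = Finset.image ⇑a (Finset.image ⇑b _)
    rw [Finset.image_image]
    rfl)

/-- The Young permutation module `M^c`, as the permutation representation of
`S_n` on the free `F`-module on the set of `c`-tabloids. -/
noncomputable def youngRep (F : Type) [Field F] (n : ℕ) (c : ℕ → ℕ) :
    Representation F (Equiv.Perm (Fin n)) (Tabloid n c →₀ F) where
  toFun g := Finsupp.lmapDomain F F (g • ·)
  map_one' := by ext x y; simp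
  map_mul' x y := by ext z w; simp [mul_smul]

/-- `ρ` is a Young module `Y^lam`: an indecomposable direct summand of `M^lam`
which is not a direct summand of any `M^mu` with `mu ⊳ lam`. -/
def IsYoungModuleFor (F : Type) [Field F] (n : ℕ) (lam : ℕ → ℕ)
    {V : Type} [AddCommGroup V] [Module F V]
    (ρ : Representation F (Equiv.Perm (Fin n)) V) : Prop :=
  IsIndecomposableRep ρ ∧ IsRepSummand (youngRep F n lam) ρ ∧
  ∀ mu : ℕ → ℕ, IsPartitionFn mu n → StrictDominates mu lam →
    ¬ IsRepSummand (youngRep F n mu) ρ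

end Young

/-! ## Orbit types, Young subgroups and related combinatorics -/

section Orbits

/-- The orbit type of a subgroup `P ≤ S_n`: the multiset of cardinalities of
the orbits of `P` on `{1,…,n}`. -/
noncomputable def orbitType (n : ℕ) (P : Subgroup (Equiv.Perm (Fin n))) : Multiset ℕ := by
  classical
  exact (Finset.univ.image fun x : Fin n => MulAction.orbit P x).val.map fun s => s.ncard

/-- The multiset of (nonempty) fiber sizes of a labelling `f : {1,…,n} → ℕ`;
the fibers of `f` are the blocks of a set partition of `{1,…,n}`. -/
noncomputable def fiberSizes {n : ℕ} (f : Fin n → ℕ) : Multiset ℕ := by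
  classical
  exact (Finset.univ.image f).val.map fun j => (Finset.univ.filter fun x => f x = j).card

/-- The subgroup of permutations preserving each fiber (block) of the
labelling `f`; for an interval labelling this is a Young subgroup. -/
def blockStabilizer (n : ℕ) (f : Fin n → ℕ) : Subgroup (Equiv.Perm (Fin n)) where
  carrier := {σ | ∀ x, f (σ x) = f x}
  one_mem' := fun _ => rfl
  mul_mem' := by
    intro a b ha hb x
    rw [Equiv.Perm.mul_apply, ha, hb]
  inv_mem' := by
    intro a ha x
    simpa using (ha (a⁻¹ x)).symm

/-- `P` is a Sylow `p`-subgroup of the subgroup `H`. -/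
def IsSylowPSubgroupIn {G : Type} [Group G] (p : ℕ) (P H : Subgroup G) : Prop :=
  P ≤ H ∧ IsPGroup p P ∧ ∀ Q : Subgroup G, IsPGroup p Q → Q ≤ H → P ≤ Q → Q = P

/-- Every member of `O` is a power of `p`. -/
def IsPPowerMultiset (p : ℕ) (O : Multiset ℕ) : Prop := ∀ x ∈ O, ∃ i : ℕ, x = p ^ i

/-- `lamE 0, …, lamE s` is the `p`-adic expansion of the partition `lam`:
each `lamE i` is a `p`-restricted partition and `lam = Σ_i p^i • lamE i`. -/
def IsPAdicExpansionOf (p : ℕ) (lam : ℕ → ℕ) (s : ℕ) (lamE : ℕ → ℕ → ℕ) : Prop :=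
  (∀ i, i ≤ s →
    (Function.support (lamE i)).Finite ∧ Antitone (lamE i) ∧ IsPRestrictedFn p (lamE i)) ∧
  ∀ j, lam j = ∑ i ∈ Finset.range (s + 1), p ^ i * lamE i j

/-- The multiset `O_lam = (1^{|lam(0)|}, p^{|lam(1)|}, …, (p^s)^{|lam(s)|})`
attached to a `p`-adic expansion. -/
noncomputable def pAdicOrbitMultiset (p s : ℕ) (lamE : ℕ → ℕ → ℕ) : Multiset ℕ :=
  ∑ i ∈ Finset.range (s + 1), Multiset.replicate (∑ᶠ j, lamE i j) (p ^ i)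

/-- `O` is a rearrangement of a refinement of `O'`: `O` is a disjoint union of
submultisets, one summing to each element of `O'`. -/
def IsRefinementRearrangement (O O' : Multiset ℕ) : Prop :=
  ∃ C : Multiset (Multiset ℕ), C.map Multiset.sum = O' ∧ C.sum = O

/-- `P` is conjugate to a subgroup of `Q`. -/
def IsConjSubgroup {G : Type} [Group G] (P Q : Subgroup G) : Prop :=
  ∃ g : G, ∀ x ∈ P, g * x * g⁻¹ ∈ Q

/-- An elementary abelian `p`-subgroup. -/
def IsElementaryAbelian (p : ℕ) {G : Type} [Group G] (E : Subgroup G) : Prop :=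
  (∀ x ∈ E, x ^ p = 1) ∧ ∀ x ∈ E, ∀ y ∈ E, x * y = y * x

/-- Every row of the tabloid `T` is a union of fibers (blocks) of `f`. -/
def rowsUnionOfFibers {n : ℕ} {c : ℕ → ℕ} (f : Fin n → ℕ) (T : Tabloid n c) : Prop :=
  ∀ j x y, f x = f y → x ∈ T.row j → y ∈ T.row j

/-- The number `m_{c,O}`: the number of `c`-tabloids each of whose rows is a
union of blocks of the set partition with labelling `f`. -/
noncomputable def mNumber (n : ℕ) (c : ℕ → ℕ) (f : Fin n → ℕ) : ℕ :=
  Nat.card {T : Tabloid n c // rowsUnionOfFibers f T}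

end Orbits

/-! ## Generic Jordan types -/

section Jordan

/-- The nilpotent Jordan block of size `p` over `K`, as an endomorphism of `K^p`. -/
def jordanShift (p : ℕ) (K : Type) [Field K] : (Fin p → K) →ₗ[K] (Fin p → K) where
  toFun v := fun i => if h : i.val + 1 < p then v ⟨i.val + 1, h⟩ else 0
  map_add' x y := by
    funext i
    by_cases h : (i : ℕ) + 1 < p <;> simp [h]
  map_smul' c x := by
    funext i
    by_cases h : (i : ℕ) + 1 < p <;> simp [h]

/-- The rational function field `F(α_1, …, α_k)`. -/
abbrev RatFuncField (F : Type) [Field F] (k : ℕ) : Type :=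
  FractionRing (MvPolynomial (Fin k) F)

/-- The operator `u_α − 1 = Σ_i α_i (ρ(g_i) − 1)` on `K ⊗_F V`, where
`K = F(α_1,…,α_k)`. -/
noncomputable def uAlphaSubOne {F : Type} [Field F] {G : Type} [Group G]
    {V : Type} [AddCommGroup V] [Module F V]
    (ρ : Representation F G V) (k : ℕ) (g : Fin k → G) :
    TensorProduct F (RatFuncField F k) V →ₗ[RatFuncField F k]
      TensorProduct F (RatFuncField F k) V :=
  ∑ i : Fin k,
    (algebraMap (MvPolynomial (Fin k) F) (RatFuncField F k) (MvPolynomial.X i)) •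
      LinearMap.baseChange (RatFuncField F k) (ρ (g i) - LinearMap.id)

end Jordan




section Aux1

variable {F : Type} [Field F] {G : Type} [Group G]
variable {X : Type} [MulAction G X]

/-- The permutation representation on `X →₀ F`. -/
noncomputable def ofMulActionF (F : Type) [Field F] (G : Type) [Group G] (X : Type)
    [MulAction G X] : Representation F G (X →₀ F) where
  toFun g := Finsupp.lmapDomain F F (g • ·)
  map_one' := by ext x y; simp
  map_mul' x y := by ext z w; simp [mul_smul]

theorem ofMulActionF_apply (g : G) (m : X →₀ F) (x : X) :
    ofMulActionF F G X g m x = m (g⁻¹ • x) := by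
  show Finsupp.mapDomain (g • ·) m x = _
  conv_lhs => rw [← smul_inv_smul g x]
  exact Finsupp.mapDomain_apply (MulAction.injective g) m _

theorem ofMulActionF_single (g : G) (x : X) (a : F) :
    ofMulActionF F G X g (Finsupp.single x a) = Finsupp.single (g • x) a := by
  show Finsupp.mapDomain (g • ·) (Finsupp.single x a) = _
  exact Finsupp.mapDomain_single

theorem mem_repFixed_iff {V : Type} [AddCommGroup V] [Module F V]
    {ρ : Representation F G V} {P : Subgroup G} {v : V} :
    v ∈ repFixed ρ P ↔ ∀ g ∈ P, ρ g v = v := Iff.rfl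

/-- `x` is fixed by every element of `P`. -/
def pfix (P : Subgroup G) (x : X) : Prop := ∀ g ∈ P, g • x = x

theorem pfix_smul_iff {P : Subgroup G} {g : G} (hg : g ∈ P) {x : X} :
    pfix P (g • x) ↔ pfix P x := by
  constructor
  · intro h
    have hx : x = g • x := by
      have h2 := h g⁻¹ (inv_mem hg)
      rw [inv_smul_smul] at h2
      exact h2
    rw [← hx] at h
    exact h
  · intro h
    rw [h g hg]
    exact h

/-- Coefficient restriction to the `P`-fixed points, as a linear map. -/
noncomputable def cFix (F : Type) [Field F] {G : Type} [Group G] {X : Type} [MulAction G X]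
    (P : Subgroup G) : (X →₀ F) →ₗ[F] (X →₀ F) := by
  classical
  exact
  { toFun := fun m => m.filter (pfix P)
    map_add' := fun a b => Finsupp.filter_add
    map_smul' := fun c a => Finsupp.filter_smul }

theorem cFix_apply_pos {P : Subgroup G} {m : X →₀ F} {x : X} (hx : pfix P x) :
    cFix F P m x = m x := by
  classical
  show (Finsupp.filter (pfix P) m) x = m x
  rw [Finsupp.filter_apply, if_pos hx]

theorem cFix_apply_neg {P : Subgroup G} {m : X →₀ F} {x : X} (hx : ¬ pfix P x) :
    cFix F P m x = 0 := by
  classical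
  show (Finsupp.filter (pfix P) m) x = 0
  rw [Finsupp.filter_apply, if_neg hx]

theorem cFix_cFix {P : Subgroup G} (m : X →₀ F) : cFix F P (cFix F P m) = cFix F P m := by
  ext y
  by_cases hy : pfix P y
  · rw [cFix_apply_pos hy, cFix_apply_pos hy]
  · rw [cFix_apply_neg hy, cFix_apply_neg hy]

theorem repFixed_ofMulAction_apply {P : Subgroup G} {m : X →₀ F}
    (hm : m ∈ repFixed (ofMulActionF F G X) P) {g : G} (hg : g ∈ P) (y : X) :
    m (g⁻¹ • y) = m y := by
  conv_rhs => rw [show m = ofMulActionF F G X g m from (hm g hg).symm]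
  rw [ofMulActionF_apply]

theorem cFix_mem_repFixed {P : Subgroup G} (m : X →₀ F) :
    cFix F P m ∈ repFixed (ofMulActionF F G X) P := by
  intro g hg
  ext y
  rw [ofMulActionF_apply]
  by_cases hy : pfix P y
  · rw [hy g⁻¹ (inv_mem hg), cFix_apply_pos hy]
  · have hy' : ¬ pfix P (g⁻¹ • y) := fun c => hy (by
      have := (pfix_smul_iff (inv_mem hg)).mp c
      exact this)
    rw [cFix_apply_neg hy, cFix_apply_neg hy']

end Aux1

section Aux2

variable {F : Type} [Field F] {G : Type} [Group G] [Finite G]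
variable {V : Type} [AddCommGroup V] [Module F V]
variable {X : Type} [MulAction G X]

theorem relTrace_def (ρ : Representation F G V) (P Q : Subgroup G) (v : V)
    [inst : Fintype (P ⧸ Q.subgroupOf P)] :
    relTrace ρ P Q v = ∑ x : P ⧸ Q.subgroupOf P, ρ ((Quotient.out x : ↥P) : G) v := by
  unfold relTrace
  congr!

theorem relTrace_comm {W : Type} [AddCommGroup W] [Module F W]
    (ρ : Representation F G V) (σ : Representation F G W) (f : V →ₗ[F] W)
    (hf : ∀ g v, f (ρ g v) = σ g (f v)) (P Q : Subgroup G) (v : V) :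
    f (relTrace ρ P Q v) = relTrace σ P Q (f v) := by
  classical
  have : Fintype (P ⧸ Q.subgroupOf P) := Fintype.ofFinite _
  rw [relTrace_def, relTrace_def, map_sum]
  exact Finset.sum_congr rfl fun x _ => hf _ _

theorem relTrace_apply_of_pfix {P Q : Subgroup G} (m : X →₀ F) {y : X} (hy : pfix P y) :
    relTrace (ofMulActionF F G X) P Q m y
      = (Nat.card (P ⧸ Q.subgroupOf P)) • m y := by
  classical
  have : Fintype (P ⧸ Q.subgroupOf P) := Fintype.ofFinite _
  rw [relTrace_def, Finsupp.finset_sum_apply]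
  have h1 : ∀ x : P ⧸ Q.subgroupOf P,
      (ofMulActionF F G X ((Quotient.out x : ↥P) : G) m) y = m y := by
    intro x
    rw [ofMulActionF_apply]
    have hmem : ((Quotient.out x : ↥P) : G) ∈ P := (Quotient.out x).2
    rw [hy _ (inv_mem hmem)]
  rw [Finset.sum_congr rfl fun x _ => h1 x, Finset.sum_const, Finset.card_univ,
    Nat.card_eq_fintype_card]

theorem p_dvd_card_quot (p : ℕ) [Fact p.Prime] {P Q : Subgroup G}
    (hP : IsPGroup p P) (hQ : Q < P) : p ∣ Nat.card (P ⧸ Q.subgroupOf P) := by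
  have h1 : Nat.card (P ⧸ Q.subgroupOf P) = (Q.subgroupOf P).index :=
    (Subgroup.index_eq_card _).symm
  obtain ⟨n, hn⟩ := IsPGroup.iff_card.mp hP
  have hdvd : (Q.subgroupOf P).index ∣ p ^ n := by
    rw [← hn]
    exact ⟨Nat.card (Q.subgroupOf P), by
      rw [mul_comm]; exact (Subgroup.card_mul_index (Q.subgroupOf P)).symm⟩
  obtain ⟨j, hj1, hj2⟩ := (Nat.dvd_prime_pow Fact.out).mp hdvd
  have hne : (Q.subgroupOf P).index ≠ 1 := by
    intro h
    rw [Subgroup.index_eq_one, Subgroup.subgroupOf_eq_top] at h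
    exact hQ.not_ge h
  match j, hj2 with
  | 0, hj2 => exact absurd (by simpa using hj2) hne
  | (j+1), hj2 => rw [h1, hj2, pow_succ]; exact Dvd.intro_left _ rfl

theorem cFix_relTrace (p : ℕ) [Fact p.Prime] [CharP F p] {P Q : Subgroup G}
    (hP : IsPGroup p P) (hQ : Q < P) (m : X →₀ F) :
    cFix F P (relTrace (ofMulActionF F G X) P Q m) = 0 := by
  ext y
  by_cases hy : pfix P y
  · rw [cFix_apply_pos hy, relTrace_apply_of_pfix _ hy, Finsupp.zero_apply]
    have h2 : ((Nat.card (P ⧸ Q.subgroupOf P) : ℕ) : F) = 0 :=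
      (CharP.cast_eq_zero_iff F p _).mpr (p_dvd_card_quot p hP hQ)
    rw [nsmul_eq_mul, h2, zero_mul]
  · rw [cFix_apply_neg hy, Finsupp.zero_apply]

theorem brauerTraceSub_le_ker_cFix (p : ℕ) [Fact p.Prime] [CharP F p] {P : Subgroup G}
    (hP : IsPGroup p P) :
    brauerTraceSub (ofMulActionF F G X) P ≤ LinearMap.ker (cFix F P) := by
  rw [brauerTraceSub, Submodule.span_le]
  rintro w ⟨Q, hQ, v, hv, rfl⟩
  exact LinearMap.mem_ker.mpr (cFix_relTrace p hP hQ v)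

theorem repFixed_map {W : Type} [AddCommGroup W] [Module F W]
    (ρ : Representation F G V) (σ : Representation F G W) (f : V →ₗ[F] W)
    (hf : ∀ g v, f (ρ g v) = σ g (f v)) {P : Subgroup G} {v : V}
    (hv : v ∈ repFixed ρ P) : f v ∈ repFixed σ P := by
  intro g hg
  rw [← hf, hv g hg]

theorem traceSub_map {W : Type} [AddCommGroup W] [Module F W]
    (ρ : Representation F G V) (σ : Representation F G W) (f : V →ₗ[F] W)
    (hf : ∀ g v, f (ρ g v) = σ g (f v)) {P : Subgroup G} {v : V}
    (hv : v ∈ brauerTraceSub ρ P) : f v ∈ brauerTraceSub σ P := by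
  have hle : brauerTraceSub ρ P ≤ (brauerTraceSub σ P).comap f := by
    rw [brauerTraceSub, Submodule.span_le]
    rintro w ⟨Q, hQ, u, hu, rfl⟩
    refine Submodule.subset_span ⟨Q, hQ, f u, repFixed_map ρ σ f hf hu, ?_⟩
    exact relTrace_comm ρ σ f hf P Q u
  exact hle hv

end Aux2

section Aux3

open scoped Classical

variable {F : Type} [Field F] {G : Type} [Group G] [Finite G]
variable {X : Type} [MulAction G X]

theorem relTrace_single_apply {P : Subgroup G} {x : X} (a : F) (y : X) :
    relTrace (ofMulActionF F G X) P
        ((MulAction.stabilizer (↥P) x).map P.subtype) (Finsupp.single x a) y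
      = if y ∈ MulAction.orbit (↥P) x then a else 0 := by
  classical
  set R : Subgroup G := (MulAction.stabilizer (↥P) x).map P.subtype with hR
  have hmemR : ∀ σ : ↥P, σ ∈ R.subgroupOf P ↔ σ • x = x := by
    intro σ
    rw [Subgroup.mem_subgroupOf]
    constructor
    · intro hσ
      rw [hR, Subgroup.mem_map] at hσ
      obtain ⟨h, hh, hhe⟩ := hσ
      have hhσ : h = σ := Subtype.coe_injective hhe
      subst hhσ
      exact hh
    · intro hs
      rw [hR, Subgroup.mem_map]
      exact ⟨σ, hs, rfl⟩
  have : Fintype (P ⧸ R.subgroupOf P) := Fintype.ofFinite _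
  rw [relTrace_def, Finsupp.finset_sum_apply]
  have hterm : ∀ c : P ⧸ R.subgroupOf P,
      (ofMulActionF F G X ((Quotient.out c : ↥P) : G) (Finsupp.single x a)) y
        = if (Quotient.out c) • x = y then a else 0 := by
    intro c
    rw [ofMulActionF_apply, Finsupp.single_apply]
    refine if_congr ?_ rfl rfl
    exact eq_inv_smul_iff
  rw [Finset.sum_congr rfl fun c _ => hterm c]
  by_cases hy : y ∈ MulAction.orbit (↥P) x
  · rw [if_pos hy]
    obtain ⟨σ, hσ0⟩ := hy
    have hσ : σ • x = y := hσ0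
    have key : ∀ c : P ⧸ R.subgroupOf P,
        (Quotient.out c) • x = y ↔ c = (σ : P ⧸ R.subgroupOf P) := by
      intro c
      constructor
      · intro h
        rw [← QuotientGroup.out_eq' c, QuotientGroup.eq, hmemR, mul_smul, hσ, ← h,
          inv_smul_smul]
      · rintro rfl
        have h2 := QuotientGroup.eq.mp (QuotientGroup.out_eq' ((σ : P ⧸ R.subgroupOf P)))
        rw [hmemR, mul_smul] at h2
        rw [hσ] at h2
        rw [← h2, smul_inv_smul]
    rw [Finset.sum_congr rfl fun c _ => if_congr (key c) rfl rfl,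
      Finset.sum_ite_eq' Finset.univ _ (fun _ => a), if_pos (Finset.mem_univ _)]
  · rw [if_neg hy]
    refine Finset.sum_eq_zero fun c _ => if_neg ?_
    intro h
    exact hy (h ▸ MulAction.mem_orbit x (Quotient.out c))

theorem fixed_constant_on_orbit {P : Subgroup G} {m : X →₀ F}
    (hm : m ∈ repFixed (ofMulActionF F G X) P) {x y : X}
    (hy : y ∈ MulAction.orbit (↥P) x) : m y = m x := by
  obtain ⟨σ, hσ0⟩ := hy
  have hσ : σ • x = y := hσ0
  have h2 := repFixed_ofMulAction_apply hm σ.2 ((σ : G) • x)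
  rw [inv_smul_smul] at h2
  rw [show (σ : G) • x = σ • x from rfl, hσ] at h2
  exact h2.symm

theorem mem_traceSub_of_cFix_eq_zero {P : Subgroup G}
    {m : X →₀ F} (hm : m ∈ repFixed (ofMulActionF F G X) P)
    (h0 : cFix F P m = 0) : m ∈ brauerTraceSub (ofMulActionF F G X) P := by
  classical
  suffices H : ∀ (N : ℕ) (m : X →₀ F),
      m ∈ repFixed (ofMulActionF F G X) P → cFix F P m = 0 →
      m.support.card = N → m ∈ brauerTraceSub (ofMulActionF F G X) P by
    exact H _ m hm h0 rfl
  intro N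
  induction N using Nat.strong_induction_on with
  | _ N ih =>
    intro m hm h0 hN
    rcases eq_or_ne m 0 with rfl | hm0
    · exact Submodule.zero_mem _
    obtain ⟨x, hx⟩ := Finsupp.support_nonempty_iff.mpr hm0
    have hmx : m x ≠ 0 := Finsupp.mem_support_iff.mp hx
    have hnf : ¬ pfix P x := by
      intro h
      apply hmx
      rw [← cFix_apply_pos h, h0, Finsupp.zero_apply]
    set R : Subgroup G := (MulAction.stabilizer (↥P) x).map P.subtype with hR
    have hRP : R < P := by
      refine lt_of_le_of_ne (Subgroup.map_subtype_le _) (fun hEq => hnf ?_)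
      intro g hg
      have hgR : g ∈ R := hEq.symm ▸ hg
      rw [hR, Subgroup.mem_map] at hgR
      obtain ⟨h, hh, hhe⟩ := hgR
      rw [← hhe]
      exact MulAction.mem_stabilizer_iff.mp hh
    have hsingle : Finsupp.single x (m x) ∈
        repFixed (ofMulActionF F G X) R := by
      intro g hg
      rw [hR, Subgroup.mem_map] at hg
      obtain ⟨h, hh, hhe⟩ := hg
      rw [ofMulActionF_single]
      have hx2 : g • x = x := by rw [← hhe]; exact MulAction.mem_stabilizer_iff.mp hh
      rw [hx2]
    set t := relTrace (ofMulActionF F G X) P R (Finsupp.single x (m x)) with ht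
    have ht_mem : t ∈ brauerTraceSub (ofMulActionF F G X) P :=
      Submodule.subset_span ⟨R, hRP, _, hsingle, rfl⟩
    have ht_apply : ∀ y, t y = if y ∈ MulAction.orbit (↥P) x then m x else 0 :=
      fun y => relTrace_single_apply (m x) y
    have ht_fix : t ∈ repFixed (ofMulActionF F G X) P := by
      intro g hg
      ext y
      rw [ofMulActionF_apply, ht_apply, ht_apply]
      have hiff : g⁻¹ • y ∈ MulAction.orbit (↥P) x ↔ y ∈ MulAction.orbit (↥P) x := by
        constructor
        · rintro ⟨σ, hσ0⟩
          have hσ : σ • x = g⁻¹ • y := hσ0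
          refine ⟨(⟨g, hg⟩ : ↥P) * σ, ?_⟩
          show ((⟨g, hg⟩ : ↥P) * σ) • x = y
          rw [mul_smul, hσ]
          exact smul_inv_smul g y
        · rintro ⟨σ, hσ0⟩
          have hσ : σ • x = y := hσ0
          refine ⟨(⟨g⁻¹, inv_mem hg⟩ : ↥P) * σ, ?_⟩
          show ((⟨g⁻¹, inv_mem hg⟩ : ↥P) * σ) • x = g⁻¹ • y
          rw [mul_smul, hσ]
          rfl
      rw [if_congr hiff rfl rfl]
    set m' := m - t with hm'
    have hm'_fix : m' ∈ repFixed (ofMulActionF F G X) P := sub_mem hm ht_fix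
    have horbm : ∀ y ∈ MulAction.orbit (↥P) x, m y = m x :=
      fun y hy => fixed_constant_on_orbit hm hy
    have hm'_cFix : cFix F P m' = 0 := by
      ext y
      rw [Finsupp.zero_apply]
      by_cases hy : pfix P y
      · rw [cFix_apply_pos hy]
        have hmy : m y = 0 := by rw [← cFix_apply_pos hy, h0, Finsupp.zero_apply]
        have hty : t y = 0 := by
          rw [ht_apply, if_neg]
          intro hyo
          apply hnf
          have hxy : x = y := by
            have hxo : x ∈ MulAction.orbit (↥P) y := by
              rw [MulAction.orbit_eq_iff.mpr hyo]
              exact MulAction.mem_orbit_self x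
            obtain ⟨σ, hσ0⟩ := hxo
            have hσ : σ • y = x := hσ0
            rw [← hσ]
            exact hy σ σ.2
          rw [hxy]
          exact hy
        rw [hm', Finsupp.sub_apply, hmy, hty, sub_zero]
      · rw [cFix_apply_neg hy]
    have hsub : m'.support ⊆ m.support.erase x := by
      intro z hz
      have hz' : m' z ≠ 0 := Finsupp.mem_support_iff.mp hz
      rw [Finset.mem_erase]
      by_cases hzo : z ∈ MulAction.orbit (↥P) x
      · exfalso
        apply hz'
        rw [hm', Finsupp.sub_apply, ht_apply, if_pos hzo, horbm z hzo, sub_self]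
      · constructor
        · intro hzx
          rw [hzx] at hzo
          exact hzo (MulAction.mem_orbit_self x)
        · rw [Finsupp.mem_support_iff]
          intro hmz
          apply hz'
          rw [hm', Finsupp.sub_apply, ht_apply, if_neg hzo, hmz, sub_zero]
    have hcard : m'.support.card < N := by
      rw [← hN]
      calc m'.support.card ≤ (m.support.erase x).card := Finset.card_le_card hsub
        _ < m.support.card := Finset.card_erase_lt_of_mem hx
    have hm'_mem := ih _ hcard m' hm'_fix hm'_cFix rfl
    have hmm : m = m' + t := by rw [hm']; abel
    rw [hmm]
    exact Submodule.add_mem _ hm'_mem ht_mem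

end Aux3

section Aux4

variable {F : Type} [Field F] {G : Type} [Group G] [Finite G]
variable {X : Type} [MulAction G X]

theorem brauerDim_eq_finrank_range (p : ℕ) [Fact p.Prime] [CharP F p]
    {V : Type} [AddCommGroup V] [Module F V]
    (ρ : Representation F G V) (P : Subgroup G) (hP : IsPGroup p P)
    (ι : V →ₗ[F] (X →₀ F)) (π : (X →₀ F) →ₗ[F] V)
    (hι : ∀ g v, ι (ρ g v) = ofMulActionF F G X g (ι v))
    (hπ : ∀ g m, π (ofMulActionF F G X g m) = ρ g (π m))
    (hπι : ∀ v, π (ι v) = v) :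
    brauerDim ρ P = Module.finrank F
      (LinearMap.range ((cFix F P) ∘ₗ (ι ∘ₗ π) ∘ₗ (cFix F P))) := by
  classical
  set μ := ofMulActionF F G X with hμ
  set A : (X →₀ F) →ₗ[F] (X →₀ F) := (cFix F P) ∘ₗ (ι ∘ₗ π) ∘ₗ (cFix F P) with hA
  set Ψ : ↥(repFixed ρ P) →ₗ[F] (X →₀ F) :=
    (cFix F P) ∘ₗ ι ∘ₗ (repFixed ρ P).subtype with hΨ
  have hΨ_apply : ∀ v : ↥(repFixed ρ P), Ψ v = cFix F P (ι (v : V)) := fun v => rfl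
  have hA_apply : ∀ m : X →₀ F, A m = cFix F P (ι (π (cFix F P m))) := fun m => rfl
  have hker : LinearMap.ker Ψ = (brauerTraceSub ρ P).comap (repFixed ρ P).subtype := by
    ext v
    rw [LinearMap.mem_ker, Submodule.mem_comap, hΨ_apply]
    constructor
    · intro h
      have h1 : ι (v : V) ∈ repFixed μ P := repFixed_map ρ μ ι hι v.2
      have h2 : ι (v : V) ∈ brauerTraceSub μ P := mem_traceSub_of_cFix_eq_zero h1 h
      have h3 := traceSub_map μ ρ π hπ h2
      rwa [hπι] at h3
    · intro h
      exact brauerTraceSub_le_ker_cFix p hP (traceSub_map ρ μ ι hι h)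
  have hrange : LinearMap.range Ψ = LinearMap.range A := by
    apply le_antisymm
    · rintro _ ⟨v, rfl⟩
      rw [hΨ_apply]
      refine ⟨cFix F P (ι (v : V)), ?_⟩
      have hd : cFix F P (ι (v : V)) - ι (v : V) ∈ brauerTraceSub μ P := by
        refine mem_traceSub_of_cFix_eq_zero
          (sub_mem (cFix_mem_repFixed _) (repFixed_map ρ μ ι hι v.2)) ?_
        rw [map_sub, cFix_cFix, sub_self]
      have hπd : π (cFix F P (ι (v : V))) =
          (v : V) + π (cFix F P (ι (v : V)) - ι (v : V)) := by
        rw [map_sub, hπι]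
        abel
      rw [hA_apply, cFix_cFix, hπd, map_add, map_add]
      have hz : cFix F P (ι (π (cFix F P (ι (v : V)) - ι (v : V)))) = 0 :=
        brauerTraceSub_le_ker_cFix p hP (traceSub_map ρ μ ι hι (traceSub_map μ ρ π hπ hd))
      rw [hz, add_zero]
    · rintro _ ⟨m, rfl⟩
      exact ⟨⟨π (cFix F P m), repFixed_map μ ρ π hπ (cFix_mem_repFixed m)⟩, rfl⟩
  rw [brauerDim, ← hker]
  have e := LinearMap.quotKerEquivRange Ψ
  rw [hrange] at e
  exact LinearEquiv.finrank_eq e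

end Aux4

section Aux5

variable {F : Type} [Field F] {G : Type} [Group G] [Finite G]
variable {X : Type} [MulAction G X]

theorem finrank_range_conj {M : Type} [AddCommGroup M] [Module F M]
    (A B : M →ₗ[F] M) (E : M ≃ₗ[F] M)
    (h : ∀ m, B (E m) = E (A m)) :
    Module.finrank F (LinearMap.range B) = Module.finrank F (LinearMap.range A) := by
  have hr : LinearMap.range B = (LinearMap.range A).map (E : M →ₗ[F] M) := by
    apply le_antisymm
    · rintro _ ⟨m, rfl⟩
      have hm : B m = E (A (E.symm m)) := by rw [← h (E.symm m), E.apply_symm_apply]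
      rw [hm]
      exact Submodule.mem_map_of_mem ⟨E.symm m, rfl⟩
    · rintro _ ⟨_, ⟨m, rfl⟩, rfl⟩
      exact ⟨E m, h m⟩
  rw [hr, LinearEquiv.finrank_map_eq]

theorem cFix_conj {P Q : Subgroup G} {g : G}
    (h : ∀ y : X, pfix Q y ↔ pfix P (g⁻¹ • y)) (m : X →₀ F) :
    cFix F Q (ofMulActionF F G X g m)
      = ofMulActionF F G X g (cFix F P m) := by
  ext y
  rw [ofMulActionF_apply]
  by_cases hy : pfix Q y
  · rw [cFix_apply_pos hy, cFix_apply_pos ((h y).mp hy), ofMulActionF_apply]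
  · rw [cFix_apply_neg hy, cFix_apply_neg (fun c => hy ((h y).mpr c))]

theorem finrank_range_cFix_conj {P Q : Subgroup G} {g : G}
    (h : ∀ y : X, pfix Q y ↔ pfix P (g⁻¹ • y))
    (e : (X →₀ F) →ₗ[F] (X →₀ F))
    (he : ∀ z, e (ofMulActionF F G X g z)
      = ofMulActionF F G X g (e z)) :
    Module.finrank F (LinearMap.range ((cFix F Q) ∘ₗ e ∘ₗ (cFix F Q)))
      = Module.finrank F (LinearMap.range ((cFix F P) ∘ₗ e ∘ₗ (cFix F P))) := by
  set μ := ofMulActionF F G X with hμ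
  have h1 : μ g ∘ₗ μ g⁻¹ = LinearMap.id := by
    rw [← Module.End.mul_eq_comp, ← map_mul, mul_inv_cancel, map_one, Module.End.one_eq_id]
  have h2 : μ g⁻¹ ∘ₗ μ g = LinearMap.id := by
    rw [← Module.End.mul_eq_comp, ← map_mul, inv_mul_cancel, map_one, Module.End.one_eq_id]
  set E : (X →₀ F) ≃ₗ[F] (X →₀ F) := LinearEquiv.ofLinear (μ g) (μ g⁻¹) h1 h2 with hE
  refine finrank_range_conj _ _ E ?_
  intro m
  have hEm : E m = μ g m := rfl
  calc ((cFix F Q) ∘ₗ e ∘ₗ (cFix F Q)) (E m)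
      = cFix F Q (e (cFix F Q (μ g m))) := rfl
    _ = cFix F Q (e (μ g (cFix F P m))) := by rw [cFix_conj h]
    _ = cFix F Q (μ g (e (cFix F P m))) := by rw [he]
    _ = μ g (cFix F P (e (cFix F P m))) := by rw [cFix_conj h]
    _ = E (((cFix F P) ∘ₗ e ∘ₗ (cFix F P)) m) := rfl

end Aux5

section Aux6

theorem exists_perm_orbit_map {n : ℕ} {P Q : Subgroup (Equiv.Perm (Fin n))}
    (horb : orbitType n P = orbitType n Q) :
    ∃ g : Equiv.Perm (Fin n), ∀ x : Fin n,
      (g : Fin n → Fin n) '' (MulAction.orbit (↥P) x) = MulAction.orbit (↥Q) (g x) := by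
  classical
  set A : Finset (Set (Fin n)) :=
    Finset.univ.image fun x : Fin n => MulAction.orbit (↥P) x with hA
  set B : Finset (Set (Fin n)) :=
    Finset.univ.image fun x : Fin n => MulAction.orbit (↥Q) x with hB
  have hgen : ∀ (R : Subgroup (Equiv.Perm (Fin n))) (inst : DecidableEq (Set (Fin n))),
      orbitType n R = ((@Finset.image _ _ inst (fun x : Fin n => MulAction.orbit (↥R) x)
        Finset.univ).val.map fun s : Set (Fin n) => s.ncard) := by
    intro R inst
    unfold orbitType
    congr!
  have horb' : A.val.map (fun s : Set (Fin n) => s.ncard)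
      = B.val.map (fun s : Set (Fin n) => s.ncard) := by
    rw [hA, hB, ← hgen P _, ← hgen Q _]
    exact horb
  have hcount : ∀ k : ℕ,
      (A.filter fun s => k = s.ncard).card = (B.filter fun s => k = s.ncard).card := by
    intro k
    have h2 := congrArg (Multiset.count k) horb'
    rw [Multiset.count_map, Multiset.count_map] at h2
    convert h2 using 2 <;> simp [Finset.card_def, Finset.filter_val]
  have hek : ∀ k : ℕ, Nonempty
      (↥(A.filter fun s => k = s.ncard) ≃ ↥(B.filter fun s => k = s.ncard)) := fun k =>
    ⟨Fintype.equivOfCardEq (by rw [Fintype.card_coe, Fintype.card_coe, hcount k])⟩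
  set ek : ∀ k : ℕ, ↥(A.filter fun s => k = s.ncard) ≃ ↥(B.filter fun s => k = s.ncard) :=
    fun k => Classical.choice (hek k) with hekdef
  set τ : Set (Fin n) → Set (Fin n) := fun a =>
    if h : a ∈ A then ((ek a.ncard) ⟨a, Finset.mem_filter.mpr ⟨h, rfl⟩⟩ : Set (Fin n))
    else a with hτ
  have hτpos : ∀ (a : Set (Fin n)) (h : a ∈ A),
      τ a = ((ek a.ncard) ⟨a, Finset.mem_filter.mpr ⟨h, rfl⟩⟩ : Set (Fin n)) := by
    intro a h
    simp only [hτ]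
    rw [dif_pos h]
  have hτB : ∀ a ∈ A, τ a ∈ B := by
    intro a ha
    rw [hτpos a ha]
    exact (Finset.mem_filter.mp ((ek a.ncard) ⟨a, Finset.mem_filter.mpr ⟨ha, rfl⟩⟩).2).1
  have hτcard : ∀ a ∈ A, (τ a).ncard = a.ncard := by
    intro a ha
    rw [hτpos a ha]
    exact ((Finset.mem_filter.mp
      ((ek a.ncard) ⟨a, Finset.mem_filter.mpr ⟨ha, rfl⟩⟩).2).2).symm
  have hekinj : ∀ (k k' : ℕ), k = k' → ∀ (a a' : Set (Fin n))
      (ha : a ∈ A.filter fun s => k = s.ncard) (ha' : a' ∈ A.filter fun s => k' = s.ncard),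
      ((ek k) ⟨a, ha⟩ : Set (Fin n)) = ((ek k') ⟨a', ha'⟩ : Set (Fin n)) → a = a' := by
    rintro k _ rfl a a' ha ha' hv
    have h3 := (ek k).injective (Subtype.ext hv)
    exact congrArg Subtype.val h3
  have hτinj : ∀ a ∈ A, ∀ a' ∈ A, τ a = τ a' → a = a' := by
    intro a ha a' ha' hv
    have hk : a.ncard = a'.ncard := by rw [← hτcard a ha, ← hτcard a' ha', hv]
    rw [hτpos a ha, hτpos a' ha'] at hv
    exact hekinj _ _ hk a a' _ _ hv
  have hβn : ∀ a : Set (Fin n), Nonempty (↥a ≃ ↥(τ a)) := by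
    intro a
    by_cases h : a ∈ A
    · have hfin1 : Fintype ↥a := Fintype.ofFinite _
      have hfin2 : Fintype ↥(τ a) := Fintype.ofFinite _
      refine ⟨@Fintype.equivOfCardEq _ _ hfin1 hfin2 ?_⟩
      have e1 : @Fintype.card ↥a hfin1 = a.ncard := by
        rw [← Nat.card_eq_fintype_card, Nat.card_coe_set_eq]
      have e2 : @Fintype.card ↥(τ a) hfin2 = (τ a).ncard := by
        rw [← Nat.card_eq_fintype_card, Nat.card_coe_set_eq]
      rw [e1, e2, hτcard a h]
    · have h3 : τ a = a := by
        simp only [hτ]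
        exact dif_neg h
      exact ⟨Equiv.setCongr h3.symm⟩
  set β : ∀ a : Set (Fin n), ↥a ≃ ↥(τ a) := fun a => Classical.choice (hβn a) with hβ
  set f : Fin n → Fin n :=
    fun x => ↑(β (MulAction.orbit (↥P) x) ⟨x, MulAction.mem_orbit_self x⟩) with hf
  have hfx : ∀ x : Fin n,
      f x = ↑(β (MulAction.orbit (↥P) x) ⟨x, MulAction.mem_orbit_self x⟩) := by
    intro x
    simp only [hf]
  have horbA : ∀ x : Fin n, MulAction.orbit (↥P) x ∈ A := fun x => by
    rw [hA]
    exact Finset.mem_image_of_mem _ (Finset.mem_univ x)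
  have hfτ : ∀ x : Fin n, f x ∈ τ (MulAction.orbit (↥P) x) := fun x => by
    rw [hfx x]
    exact (β (MulAction.orbit (↥P) x) ⟨x, MulAction.mem_orbit_self x⟩).2
  have hdep : ∀ (a : Set (Fin n)) (y : Fin n) (hy : y ∈ a),
      MulAction.orbit (↥P) y = a → f y = ↑(β a ⟨y, hy⟩) := by
    intro a y hy h
    subst h
    exact hfx y
  have hBorb : ∀ b ∈ B, ∀ z : Fin n, z ∈ b → MulAction.orbit (↥Q) z = b := by
    intro b hb z hz
    rw [hB] at hb
    obtain ⟨w, _, hw⟩ := Finset.mem_image.mp hb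
    rw [← hw] at hz ⊢
    exact MulAction.orbit_eq_iff.mpr hz
  have hkey : ∀ x : Fin n, τ (MulAction.orbit (↥P) x) = MulAction.orbit (↥Q) (f x) :=
    fun x => (hBorb _ (hτB _ (horbA x)) (f x) (hfτ x)).symm
  have hfinj : Function.Injective f := by
    intro x y hxy
    by_cases hxyo : MulAction.orbit (↥P) x = MulAction.orbit (↥P) y
    · have hyx : y ∈ MulAction.orbit (↥P) x := by
        rw [hxyo]
        exact MulAction.mem_orbit_self y
      have h1 : f y = ↑(β (MulAction.orbit (↥P) x) ⟨y, hyx⟩) := hdep _ y hyx hxyo.symm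
      rw [h1, hfx x] at hxy
      have h3 := (β (MulAction.orbit (↥P) x)).injective (Subtype.ext hxy)
      exact congrArg Subtype.val h3
    · exfalso
      apply hxyo
      apply hτinj _ (horbA x) _ (horbA y)
      rw [hkey x, hkey y, hxy]
  have hfbij := Finite.injective_iff_bijective.mp hfinj
  refine ⟨Equiv.ofBijective f hfbij, ?_⟩
  intro x
  have hgx : (Equiv.ofBijective f hfbij) x = f x := rfl
  have hgc : (Equiv.ofBijective f hfbij : Fin n → Fin n) = f := rfl
  rw [hgx, hgc, ← hkey x]
  apply Set.Subset.antisymm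
  · rintro _ ⟨y, hy, rfl⟩
    have h1 : f y = ↑(β (MulAction.orbit (↥P) x) ⟨y, hy⟩) :=
      hdep _ y hy (MulAction.orbit_eq_iff.mpr hy)
    rw [h1]
    exact (β (MulAction.orbit (↥P) x) ⟨y, hy⟩).2
  · intro z hz
    obtain ⟨⟨y, hy⟩, hyz⟩ := (β (MulAction.orbit (↥P) x)).surjective ⟨z, hz⟩
    refine ⟨y, hy, ?_⟩
    rw [hdep _ y hy (MulAction.orbit_eq_iff.mpr hy)]
    exact congrArg Subtype.val hyz

end Aux6

section Aux7

variable {n : ℕ} {c : ℕ → ℕ}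

theorem tabloid_smul_eq_iff {σ : Equiv.Perm (Fin n)} {T : Tabloid n c} :
    σ • T = T ↔ ∀ j, (T.row j).image ⇑σ = T.row j := by
  constructor
  · intro h j
    conv_rhs => rw [← h]
    rfl
  · intro h
    apply Tabloid.ext'
    funext j
    exact h j

theorem finsetInv_iff (S : Subgroup (Equiv.Perm (Fin n))) (R : Finset (Fin n)) :
    (∀ σ ∈ S, R.image ⇑σ = R) ↔
      ∀ x ∈ R, (MulAction.orbit (↥S) x : Set (Fin n)) ⊆ ↑R := by
  constructor
  · intro h x hx z hz
    obtain ⟨σ, hσ0⟩ := hz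
    have hσ : σ • x = z := hσ0
    rw [← hσ, ← h ↑σ σ.2]
    exact Finset.mem_image_of_mem _ hx
  · intro h σ hσ
    apply Finset.eq_of_subset_of_card_le
    · intro z hz
      obtain ⟨x, hx, rfl⟩ := Finset.mem_image.mp hz
      have h2 : (⟨σ, hσ⟩ : ↥S) • x ∈ MulAction.orbit (↥S) x := MulAction.mem_orbit x _
      exact h x hx h2
    · rw [Finset.card_image_of_injective _ σ.injective]

theorem finsetInv_image {P Q : Subgroup (Equiv.Perm (Fin n))} {g : Equiv.Perm (Fin n)}
    (hg : ∀ x : Fin n, (g : Fin n → Fin n) '' (MulAction.orbit (↥P) x)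
      = MulAction.orbit (↥Q) (g x)) (R : Finset (Fin n)) :
    (∀ σ ∈ P, R.image ⇑σ = R) ↔ (∀ σ ∈ Q, (R.image ⇑g).image ⇑σ = R.image ⇑g) := by
  rw [finsetInv_iff, finsetInv_iff]
  constructor
  · intro h z hz
    obtain ⟨x, hx, rfl⟩ := Finset.mem_image.mp hz
    rw [← hg x]
    rintro _ ⟨w, hw, rfl⟩
    have hwR : w ∈ R := h x hx hw
    exact Finset.mem_coe.mpr (Finset.mem_image_of_mem _ hwR)
  · intro h x hx z hz
    have h1 : g z ∈ MulAction.orbit (↥Q) (g x) := by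
      rw [← hg x]
      exact ⟨z, hz, rfl⟩
    have h2 : g z ∈ R.image ⇑g :=
      Finset.mem_coe.mp (h (g x) (Finset.mem_image_of_mem _ hx) h1)
    obtain ⟨w, hw, hwz⟩ := Finset.mem_image.mp h2
    have hwz' : w = z := g.injective hwz
    rwa [← hwz']

theorem pfix_tabloid_transport {P Q : Subgroup (Equiv.Perm (Fin n))} {g : Equiv.Perm (Fin n)}
    (hg : ∀ x : Fin n, (g : Fin n → Fin n) '' (MulAction.orbit (↥P) x)
      = MulAction.orbit (↥Q) (g x)) (T : Tabloid n c) :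
    pfix P T ↔ pfix Q (g • T) := by
  constructor
  · intro h σ hσ
    apply Tabloid.ext'
    funext j
    show ((g • T).row j).image ⇑σ = (g • T).row j
    rw [show (g • T).row j = (T.row j).image ⇑g from rfl]
    exact (finsetInv_image hg (T.row j)).mp
      (fun σ' hσ' => congrFun (congrArg Tabloid.row (h σ' hσ')) j) σ hσ
  · intro h σ hσ
    apply Tabloid.ext'
    funext j
    show (T.row j).image ⇑σ = T.row j
    refine (finsetInv_image hg (T.row j)).mpr ?_ σ hσ
    intro σ' hσ'
    exact congrFun (congrArg Tabloid.row (h σ' hσ')) j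

end Aux7

-- AUXEND


/-- the dimension of the Brauer construction of a Young module
only depends on the orbit type of the `p`-subgroup. -/
theorem stmt_1 (p : ℕ) [Fact p.Prime] (F : Type) [Field F] [IsAlgClosed F] [CharP F p]
    (n : ℕ) (lam : ℕ → ℕ) (hlam : IsPartitionFn lam n)
    (V : Type) [AddCommGroup V] [Module F V]
    (ρ : Representation F (Equiv.Perm (Fin n)) V)
    (hY : IsYoungModuleFor F n lam ρ)
    (P Q : Subgroup (Equiv.Perm (Fin n)))
    (hP : IsPGroup p P) (hQ : IsPGroup p Q)
    (horb : orbitType n P = orbitType n Q) :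
    brauerDim ρ P = brauerDim ρ Q := by
  classical
  obtain ⟨ι, π, hι, hπ, hπι⟩ := hY.2.1
  have hι' : ∀ (g : Equiv.Perm (Fin n)) (w : V), ι (ρ g w)
      = ofMulActionF F (Equiv.Perm (Fin n)) (Tabloid n lam) g (ι w) := hι
  have hπ' : ∀ (g : Equiv.Perm (Fin n)) (v : Tabloid n lam →₀ F),
      π (ofMulActionF F (Equiv.Perm (Fin n)) (Tabloid n lam) g v)
      = ρ g (π v) := hπ
  obtain ⟨g, hg⟩ := exists_perm_orbit_map horb
  have hfixiff : ∀ y : Tabloid n lam, pfix Q y ↔ pfix P (g⁻¹ • y) := by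
    intro y
    have h1 := pfix_tabloid_transport hg (g⁻¹ • y)
    rw [smul_inv_smul] at h1
    exact h1.symm
  rw [brauerDim_eq_finrank_range p ρ P hP ι π hι' hπ' hπι,
      brauerDim_eq_finrank_range p ρ Q hQ ι π hι' hπ' hπι]
  refine (finrank_range_cFix_conj hfixiff (ι ∘ₗ π) ?_).symm
  intro z
  show ι (π _) = _
  rw [hπ', hι']
  rfl
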